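/- For all natural numbers n ≥ 1, mset_pair(2^{2^n} + 1, 2^{2^n} + 1) = 2^{2^{n+1}} + 1; in particular if all Fermat primes other than 3, 5, 17, 257, 65537 fail to exist is false (i.e., some larger Fermat prime exists), then there exists a Fermat prime that is not an mset_unpair hyper-prime. -/

import Mathlib

/-- The set of positions of 1-bits in the binary representation of `n`. -/
def nat2set (n : ℕ) : Finset ℕ := (Finset.range n).filter (fun k => n.testBit k)

/-- Bit-interleaving pairing. -/
def bitpair (p : ℕ × ℕ) : ℕ :=
  (∑ k ∈ nat2set p.1, 2 ^ (2 * k)) + ∑ k ∈ nat2set p.2, 2 ^ (2 * k + 1)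

/-- Pairing on 2-element multisets of naturals. -/
def mset_pair (p : ℕ × ℕ) : ℕ :=
  bitpair (min p.1 p.2, max p.1 p.2 - min p.1 p.2)

/-- `m` appears in the tree of recursive applications of `mset_unpair`
(the inverse of `mset_pair`) starting at `p`. -/
inductive Reach : ℕ → ℕ → Prop
  | refl (p : ℕ) : Reach p p
  | left (p n a b : ℕ) : Reach p n → 1 < n → mset_pair (a, b) = n → Reach p a
  | right (p n a b : ℕ) : Reach p n → 1 < n → mset_pair (a, b) = n → Reach p b

/-- A hyper-prime: a prime all of whose recursive `mset_unpair` components are prime. -/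
def HyperPrime (p : ℕ) : Prop := p.Prime ∧ ∀ m : ℕ, Reach p m → m.Prime

/-- A Fermat prime: a prime of the form `2^(2^n) + 1` with `n > 0`. -/
def FermatPrime (p : ℕ) : Prop := ∃ n : ℕ, 0 < n ∧ p = 2 ^ 2 ^ n + 1 ∧ p.Prime

lemma nat2set_zero : nat2set 0 = ∅ := by simp [nat2set]

lemma nat2set_two_pow_add_one {m : ℕ} (hm : 1 ≤ m) :
    nat2set (2 ^ m + 1) = {0, m} := by
  ext k
  simp only [nat2set, Finset.mem_filter, Finset.mem_range, Finset.mem_insert,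
    Finset.mem_singleton]
  constructor
  · rintro ⟨hk, htb⟩
    by_contra hor
    push_neg at hor
    obtain ⟨h0, hmne⟩ := hor
    rcases lt_trichotomy k m with h | h | h
    · rw [Nat.testBit_two_pow_add_gt h] at htb
      have : (1 : ℕ) < 2 ^ k := Nat.one_lt_two_pow (by omega)
      rw [Nat.testBit_lt_two_pow this] at htb
      exact Bool.false_ne_true htb
    · exact hmne h
    · have : 2 ^ m + 1 < 2 ^ k := by
        have h1 : 2 ^ m + 2 ^ m ≤ 2 ^ k := by
          calc 2 ^ m + 2 ^ m = 2 ^ (m + 1) := by ring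
          _ ≤ 2 ^ k := Nat.pow_le_pow_right (by norm_num) (by omega)
        have h2 : 2 ≤ 2 ^ m := Nat.one_lt_two_pow (by omega)
        omega
      rw [Nat.testBit_lt_two_pow this] at htb
      exact Bool.false_ne_true htb
  · rintro (h | h) <;> rw [h]
    · refine ⟨by positivity, ?_⟩
      rw [Nat.testBit_zero]
      have h2 : 2 ∣ 2 ^ m := dvd_pow_self 2 (by omega)
      simp only [decide_eq_true_eq]
      omega
    · refine ⟨by have := (Nat.lt_pow_self (by norm_num : 1 < 2) : m < 2 ^ m); omega, ?_⟩
      rw [Nat.testBit_two_pow_add_eq]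
      have h1 : (1 : ℕ) < 2 ^ m := Nat.one_lt_two_pow (by omega)
      rw [Nat.testBit_lt_two_pow h1]
      rfl

lemma mset_pair_fermat (n : ℕ) (hn : 1 ≤ n) :
    mset_pair (2 ^ 2 ^ n + 1, 2 ^ 2 ^ n + 1) = 2 ^ 2 ^ (n + 1) + 1 := by
  have hm : 1 ≤ 2 ^ n := Nat.one_le_two_pow
  simp only [mset_pair, min_self, max_self, Nat.sub_self, bitpair]
  rw [nat2set_zero, nat2set_two_pow_add_one hm]
  have h0m : (0 : ℕ) ≠ 2 ^ n := by positivity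
  rw [Finset.sum_insert (by simpa using h0m), Finset.sum_singleton, Finset.sum_empty]
  have : 2 * 2 ^ n = 2 ^ (n + 1) := by ring
  rw [mul_zero, this, pow_zero]
  ring

lemma reach_trans {p q r : ℕ} (h1 : Reach p q) (h2 : Reach q r) : Reach p r := by
  induction h2 with
  | refl => exact h1
  | left n a b _ hn hp ih => exact Reach.left p n a b ih hn hp
  | right n a b _ hn hp ih => exact Reach.right p n a b ih hn hp

lemma reach_fermat_pred (m : ℕ) (hm : 1 ≤ m) :
    Reach (2 ^ 2 ^ (m + 1) + 1) (2 ^ 2 ^ m + 1) := by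
  refine Reach.left _ (2 ^ 2 ^ (m + 1) + 1) _ (2 ^ 2 ^ m + 1) (Reach.refl _) ?_
    (mset_pair_fermat m hm)
  have : 1 ≤ 2 ^ 2 ^ (m + 1) := Nat.one_le_two_pow
  omega

lemma reach_fermat_down (d : ℕ) : Reach (2 ^ 2 ^ (5 + d) + 1) (2 ^ 2 ^ 5 + 1) := by
  induction d with
  | zero => exact Reach.refl _
  | succ k ih =>
      have h : (5 + (k + 1)) = (5 + k) + 1 := by omega
      rw [h]
      exact reach_trans (reach_fermat_pred (5 + k) (by omega)) ih

/-- `mset_pair(2^(2^n)+1, 2^(2^n)+1) = 2^(2^(n+1))+1` for `n ≥ 1`; consequently,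
if there is a Fermat prime other than 3, 5, 17, 257, 65537, then some Fermat
prime is not an `mset_unpair` hyper-prime. -/
theorem fermat_hyper_primes :
    (∀ n : ℕ, 1 ≤ n →
      mset_pair (2 ^ 2 ^ n + 1, 2 ^ 2 ^ n + 1) = 2 ^ 2 ^ (n + 1) + 1) ∧
    ((∃ p : ℕ, FermatPrime p ∧ p ∉ ({3, 5, 17, 257, 65537} : Set ℕ)) →
      ∃ p : ℕ, FermatPrime p ∧ ¬HyperPrime p) := by
  constructor
  · exact mset_pair_fermat
  · rintro ⟨p, hfp, hnot⟩
    refine ⟨p, hfp, ?_⟩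
    obtain ⟨n, hn, rfl, hprime⟩ := hfp
    have hn5 : 5 ≤ n := by
      by_contra h
      push_neg at h
      interval_cases n <;> exact hnot (by norm_num)
    obtain ⟨d, rfl⟩ : ∃ d, n = 5 + d := ⟨n - 5, by omega⟩
    intro ⟨_, hall⟩
    have hr := hall _ (reach_fermat_down d)
    norm_num at hr
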